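/- Assume q is a power of 2 and r ≥ 2. Then the matrix code of relations C_mat(A) of the canonical family A contains an F_{q^m}-linear subspace W of dimension ⌊(r−1)/2⌋ such that every matrix M ∈ W has rank at most 2. -/

import Mathlib

open Matrix

/-- Componentwise (Schur) product of two vectors. -/
def schur {F : Type*} [Field F] {n : ℕ} (a b : Fin n → F) : Fin n → F :=
  fun t => a t * b t

/-- The matrix code of quadratic relations associated with the ordered family `v`. -/
def Cmat {F : Type*} [Field F] {n : ℕ} {ι : Type*} [Fintype ι] [LinearOrder ι]
    (v : ι → Fin n → F) : Set (Matrix ι ι F) :=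
  { M | ∃ c : ι → ι → F,
      (∑ i : ι, ∑ j : ι, (if i ≤ j then c i j • schur (v i) (v j) else 0)) = 0 ∧
      (∀ i j : ι, i < j → M i j = c i j ∧ M j i = c i j) ∧
      (∀ i : ι, M i i = 2 * c i i) }

/-- Linear order on the index pairs `(j,i)` of the canonical family. -/
noncomputable instance pairLO (m r : ℕ) : LinearOrder (Fin m × Fin r) :=
  LinearOrder.lift' (fun p => finProdFinEquiv p) finProdFinEquiv.injective

/-- Let `q` be a power of `2`, `r ≥ 2`, `F` a field with `q^m` elements
and `A` the canonical family `a_{(j,i)} = (x^i y)^{q^j}` (assumed linearly independent).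
Then `C_mat(A)` contains an `F`-linear subspace `W` of dimension `⌊(r−1)/2⌋` all of whose
elements have rank at most `2`. -/
theorem cmat_rank_two_subspace_char_two
    (q m r nn : ℕ) (hq : ∃ e : ℕ, 0 < e ∧ q = 2 ^ e)
    (hm : 0 < m) (hr : 2 ≤ r) (hn : 0 < nn)
    (F : Type*) [Field F] [Fintype F] (hF : Fintype.card F = q ^ m)
    (x y : Fin nn → F) (hx : Function.Injective x) (hy : ∀ t, y t ≠ 0)
    (A : Fin m × Fin r → Fin nn → F)
    (hA : A = fun p t => (x t ^ (p.2 : ℕ) * y t) ^ q ^ (p.1 : ℕ))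
    (hAind : LinearIndependent F A) :
    ∃ W : Submodule F (Matrix (Fin m × Fin r) (Fin m × Fin r) F),
      (W : Set (Matrix (Fin m × Fin r) (Fin m × Fin r) F)) ⊆ Cmat A ∧
      Module.finrank F W = (r - 1) / 2 ∧
      ∀ M ∈ W, M.rank ≤ 2 := by
  classical
  obtain ⟨e, he, rfl⟩ := hq
  -- characteristic 2
  have h2 : (2 : F) = 0 := by
    have hc : ((Fintype.card F : ℕ) : F) = 0 := FiniteField.cast_card_eq_zero F
    rw [hF] at hc
    push_cast at hc
    have hem : e * m ≠ 0 := by positivity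
    rw [← pow_mul] at hc
    exact pow_eq_zero_iff hem |>.mp hc
  set K := (r - 1) / 2 with hK
  -- the distinguished indices
  let p0 : Fin m × Fin r := (⟨0, hm⟩, ⟨0, by omega⟩)
  have htb : ∀ k : Fin K, 2 * ((k : ℕ) + 1) < r := fun k => by
    have := k.isLt; omega
  have hsb : ∀ k : Fin K, (k : ℕ) + 1 < r := fun k => by
    have := k.isLt; omega
  let tk : Fin K → Fin m × Fin r := fun k => (⟨0, hm⟩, ⟨2 * ((k : ℕ) + 1), htb k⟩)
  let sk : Fin K → Fin m × Fin r := fun k => (⟨0, hm⟩, ⟨(k : ℕ) + 1, hsb k⟩)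
  -- order facts (for the lifted linear order)
  have hle : ∀ a b : Fin m × Fin r,
      (pairLO m r).le a b ↔ ((a.2 : ℕ) + r * a.1 ≤ (b.2 : ℕ) + r * b.1) := by
    intro a b
    rw [show ((pairLO m r).le a b) = (finProdFinEquiv a ≤ finProdFinEquiv b) from rfl]
    simp [Fin.le_def]
  have hlt : ∀ a b : Fin m × Fin r,
      (pairLO m r).lt a b ↔ ((a.2 : ℕ) + r * a.1 < (b.2 : ℕ) + r * b.1) := by
    intro a b
    rw [show ((pairLO m r).lt a b) = (finProdFinEquiv a < finProdFinEquiv b) from rfl]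
    simp [Fin.lt_def]
  have hp0le : ∀ k : Fin K, (pairLO m r).le p0 (tk k) := fun k => by
    rw [hle]; simp [p0, tk]
  have htnl : ∀ k : Fin K, ¬ (pairLO m r).lt (tk k) p0 := fun k => by
    rw [hlt]; simp [p0, tk]
  have hp0ne : ∀ k : Fin K, p0 ≠ tk k := fun k => by
    simp only [p0, tk, Ne, Prod.mk.injEq, Fin.mk.injEq]
    omega
  have htinj : Function.Injective tk := by
    intro a b hab
    simp only [tk, Prod.mk.injEq, Fin.mk.injEq] at hab
    exact Fin.ext (by omega)
  -- the generators
  let f : Fin K → Matrix (Fin m × Fin r) (Fin m × Fin r) F :=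
    fun k => Matrix.single p0 (tk k) 1 + Matrix.single (tk k) p0 1
  have hfa : ∀ (k : Fin K) i j, f k i j =
      (if p0 = i ∧ tk k = j then (1:F) else 0) + (if tk k = i ∧ p0 = j then 1 else 0) :=
    fun k i j => rfl
  have hli : LinearIndependent F f := by
    rw [Fintype.linearIndependent_iff]
    intro g hg k0
    have h := congrFun (congrFun hg p0) (tk k0)
    simp only [Finset.sum_apply, Matrix.sum_apply, Matrix.smul_apply, Matrix.zero_apply,
      smul_eq_mul] at h
    rw [Finset.sum_congr rfl (fun k _ => by rw [hfa k p0 (tk k0)])] at h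
    rw [Finset.sum_eq_single k0] at h
    · simpa [htinj.eq_iff, fun k => hp0ne k, (hp0ne k0).symm] using h
    · intro k _ hk
      have h1 : ¬ (tk k = tk k0) := fun hc => hk (htinj hc)
      have h2' : ¬ (p0 = tk k0) := hp0ne k0
      simp [h1, h2']
    · intro h; exact absurd (Finset.mem_univ k0) h
  -- key schur identity
  have key : ∀ k : Fin K, schur (A p0) (A (tk k)) + schur (A (sk k)) (A (sk k)) = 0 := by
    intro k
    funext t
    have hxy : A p0 t * A (tk k) t = A (sk k) t * A (sk k) t := by
      simp only [hA, p0, tk, sk, pow_zero, pow_one]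
      ring
    show A p0 t * A (tk k) t + A (sk k) t * A (sk k) t = 0
    rw [hxy, ← two_mul, h2, zero_mul]
  -- double-sum evaluation lemma
  have dsum : ∀ (P Q : Fin m × Fin r) (S : (Fin m × Fin r) → (Fin m × Fin r) → Fin nn → F),
      (∑ i : Fin m × Fin r, ∑ j : Fin m × Fin r, (if P = i ∧ Q = j then S i j else 0))
        = S P Q := by
    intro P Q S
    rw [Finset.sum_eq_single P]
    · rw [Finset.sum_eq_single Q]
      · rw [if_pos ⟨rfl, rfl⟩]
      · intro j _ hj; rw [if_neg (fun h => hj h.2.symm)]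
      · intro h; exact absurd (Finset.mem_univ Q) h
    · intro i _ hi
      refine Finset.sum_eq_zero fun j _ => ?_
      rw [if_neg (fun h => hi h.1.symm)]
    · intro h; exact absurd (Finset.mem_univ P) h
  refine ⟨Submodule.span F (Set.range f), ?_, ?_, ?_⟩
  · -- subset of Cmat
    intro M hM
    rw [SetLike.mem_coe, Submodule.mem_span_range_iff_exists_fun] at hM
    obtain ⟨g, hg⟩ := hM
    refine ⟨fun i j => ∑ k, g k *
      ((if p0 = i ∧ tk k = j then 1 else 0) + (if sk k = i ∧ sk k = j then 1 else 0)),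
      ?_, ?_, ?_⟩
    · -- the quadratic relation
      have mid : (∑ i : Fin m × Fin r, ∑ j : Fin m × Fin r, ∑ k : Fin K,
          g k • ((if p0 = i ∧ tk k = j then schur (A i) (A j) else 0) +
            (if sk k = i ∧ sk k = j then schur (A i) (A j) else 0))) = 0 := by
        rw [Finset.sum_congr rfl fun (i : Fin m × Fin r) _ => Finset.sum_comm,
          Finset.sum_comm]
        refine Finset.sum_eq_zero fun k _ => ?_
        have inner : (∑ i : Fin m × Fin r, ∑ j : Fin m × Fin r,
            g k • ((if p0 = i ∧ tk k = j then schur (A i) (A j) else 0) +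
              (if sk k = i ∧ sk k = j then schur (A i) (A j) else 0)))
            = g k • (schur (A p0) (A (tk k)) + schur (A (sk k)) (A (sk k))) := by
          simp only [← Finset.smul_sum]
          congr 1
          rw [Finset.sum_congr rfl fun (i : Fin m × Fin r) _ => Finset.sum_add_distrib,
            Finset.sum_add_distrib]
          congr 1
          · exact dsum p0 (tk k) _
          · exact dsum (sk k) (sk k) _
        rw [inner, key k, smul_zero]
      refine Eq.trans (Finset.sum_congr rfl fun i _ =>
        Finset.sum_congr rfl fun j _ => ?_) mid
      split_ifs with hij
      · rw [Finset.sum_smul]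
        refine Finset.sum_congr rfl fun k _ => ?_
        simp only [mul_smul, add_smul, ite_smul, one_smul, zero_smul]
      · symm
        refine Finset.sum_eq_zero fun k _ => ?_
        have h1 : ¬(p0 = i ∧ tk k = j) := by
          rintro ⟨hi, hj⟩; exact hij (hi ▸ hj ▸ hp0le k)
        have h2' : ¬(sk k = i ∧ sk k = j) := by
          rintro ⟨hi, hj⟩; exact hij (hi ▸ hj ▸ ((hle (sk k) (sk k)).mpr (le_refl _)))
        rw [if_neg h1, if_neg h2', add_zero, smul_zero]
    · -- off-diagonal entries
      intro i j hij
      have hnat : (i.2 : ℕ) + r * i.1 < (j.2 : ℕ) + r * j.1 := (hlt i j).mp hij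
      have hne : i ≠ j := fun hEq => by rw [hEq] at hnat; omega
      have hterm : ∀ k : Fin K, ¬(sk k = i ∧ sk k = j) := by
        rintro k ⟨hi, hj⟩; exact hne (hi ▸ hj ▸ rfl)
      have hterm2 : ∀ k : Fin K, ¬(tk k = i ∧ p0 = j) := by
        rintro k ⟨hi, hj⟩
        exact htnl k (hi ▸ hj ▸ hij)
      have hterm3 : ∀ k : Fin K, ¬(p0 = j ∧ tk k = i) := by
        rintro k ⟨hj, hi⟩; exact hterm2 k ⟨hi, hj⟩
      constructor
      · rw [← hg]
        simp only [Finset.sum_apply, Matrix.sum_apply, Matrix.smul_apply, smul_eq_mul]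
        refine Finset.sum_congr rfl fun k _ => ?_
        rw [hfa, if_neg (hterm2 k), if_neg (hterm k)]
      · rw [← hg]
        simp only [Finset.sum_apply, Matrix.sum_apply, Matrix.smul_apply, smul_eq_mul]
        refine Finset.sum_congr rfl fun k _ => ?_
        rw [hfa, if_neg (hterm3 k), if_neg (hterm k), zero_add, add_zero]
        congr 1
        exact if_congr (Iff.intro (fun h => ⟨h.2, h.1⟩) (fun h => ⟨h.2, h.1⟩)) rfl rfl
    · -- diagonal entries
      intro i
      rw [h2, zero_mul, ← hg]
      simp only [Finset.sum_apply, Matrix.sum_apply, Matrix.smul_apply, smul_eq_mul]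
      refine Finset.sum_eq_zero fun k _ => ?_
      have h1 : ¬(p0 = i ∧ tk k = i) := by
        rintro ⟨hi, hj⟩; exact hp0ne k (hi.trans hj.symm)
      have h2' : ¬(tk k = i ∧ p0 = i) := by
        rintro ⟨hi, hj⟩; exact hp0ne k (hj.trans hi.symm)
      rw [hfa, if_neg h1, if_neg h2']
      simp
  · rw [finrank_span_eq_card hli, Fintype.card_fin]
  · -- rank at most 2
    intro M hM
    rw [Submodule.mem_span_range_iff_exists_fun] at hM
    obtain ⟨g, hg⟩ := hM
    set a : (Fin m × Fin r) → F := fun i => if p0 = i then 1 else 0 with ha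
    set b : (Fin m × Fin r) → F := fun j => ∑ k, g k * (if tk k = j then 1 else 0) with hb
    have hM2 : ∀ i j, M i j = a i * b j + b i * a j := by
      intro i j
      rw [← hg]
      simp only [Finset.sum_apply, Matrix.sum_apply, Matrix.smul_apply, smul_eq_mul,
        ha, hb]
      rw [Finset.mul_sum, Finset.sum_mul, ← Finset.sum_add_distrib]
      refine Finset.sum_congr rfl fun k _ => ?_
      rw [hfa]
      simp only [ite_and]
      split_ifs <;> ring
    have hrange : LinearMap.range M.mulVecLin ≤ Submodule.span F {a, b} := by
      rintro w ⟨z, rfl⟩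
      have hterm : ∀ i' j', M i' j' * z j' = b j' * z j' * a i' + a j' * z j' * b i' := by
        intro i' j'; rw [hM2]; ring
      have hmz : M.mulVec z = (b ⬝ᵥ z) • a + (a ⬝ᵥ z) • b := by
        funext i
        simp only [mulVec, dotProduct, Pi.add_apply, Pi.smul_apply, smul_eq_mul]
        rw [Finset.sum_congr rfl fun j _ => hterm i j, Finset.sum_add_distrib,
          ← Finset.sum_mul, ← Finset.sum_mul]
      rw [show M.mulVecLin z = M.mulVec z from rfl, hmz]
      refine Submodule.add_mem _
        (Submodule.smul_mem _ _ (Submodule.subset_span ?_))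
        (Submodule.smul_mem _ _ (Submodule.subset_span ?_))
      · exact Set.mem_insert _ _
      · exact Set.mem_insert_of_mem _ rfl
    have hr1 : M.rank ≤ Module.finrank F (Submodule.span F ({a, b} : Set _)) :=
      Submodule.finrank_mono hrange
    refine hr1.trans ((finrank_span_le_card _).trans ?_)
    rw [Set.toFinset_insert, Set.toFinset_singleton]
    exact (Finset.card_insert_le _ _).trans (by simp)
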